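/- Let Ω be a nonempty compact metric space equipped with a continuous action of ℝⁿ, written (v, T) ↦ T − v, and let μ be a Borel probability measure on Ω invariant under the action. Then the set of linear functionals β : ℝⁿ → ℝ for which there exists a continuous eigenfunction with eigenvalue β is countable. -/

import Mathlib

open MeasureTheory

/-- Let `Ω` be a nonempty compact metric space with a continuous `ℝⁿ`-action `(v, T) ↦ T − v`
(here `act v T`), and let `μ` be a Borel probability measure on `Ω` invariant under the
action.  Then the set of linear functionals `β : ℝⁿ → ℝ` for which there exists a continuous
eigenfunction with eigenvalue `β` is countable. -/
theorem stmt5 {Ω : Type*} [MetricSpace Ω] [CompactSpace Ω] [Nonempty Ω]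
    [MeasurableSpace Ω] [BorelSpace Ω] (n : ℕ)
    (act : (Fin n → ℝ) → Ω → Ω)
    (hact_cont : Continuous fun p : (Fin n → ℝ) × Ω => act p.1 p.2)
    (hact_zero : ∀ T, act 0 T = T)
    (hact_add : ∀ v w T, act (v + w) T = act v (act w T))
    (μ : Measure Ω) [IsProbabilityMeasure μ]
    (hinv : ∀ v : Fin n → ℝ, MeasurePreserving (act v) μ μ) :
    Set.Countable {β : (Fin n → ℝ) →ₗ[ℝ] ℝ |
      ∃ f : C(Ω, Circle), ∀ (T : Ω) (v : Fin n → ℝ),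
        (f (act v T) : ℂ) = Complex.exp (2 * Real.pi * Complex.I * (β v : ℝ)) * (f T : ℂ)} := by
  set S := {β : (Fin n → ℝ) →ₗ[ℝ] ℝ |
      ∃ f : C(Ω, Circle), ∀ (T : Ω) (v : Fin n → ℝ),
        (f (act v T) : ℂ) = Complex.exp (2 * Real.pi * Complex.I * (β v : ℝ)) * (f T : ℂ)}
    with hS
  rw [← Set.countable_coe_iff]
  -- choose an eigenfunction for each β ∈ S
  have hF : ∀ β : S, ∃ f : C(Ω, Circle), ∀ (T : Ω) (v : Fin n → ℝ),
      (f (act v T) : ℂ)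
        = Complex.exp (2 * Real.pi * Complex.I * (((β : (Fin n → ℝ) →ₗ[ℝ] ℝ)) v : ℝ)) * (f T : ℂ) :=
    fun β => β.2
  choose F hFspec using hF
  -- the corresponding complex-valued continuous maps
  set G : S → C(Ω, ℂ) := fun β =>
    ⟨fun T => ((F β) T : ℂ), by continuity⟩ with hG
  -- key separation estimate
  have hsep : ∀ β β' : S, β ≠ β' → 1 ≤ dist (G β) (G β') := by
    intro β β' hne
    have hf := hFspec β
    have hg := hFspec β'
    set f := F β
    set g := F β'
    -- find v with (β - β') v = 1/2
    have hβne : (β : (Fin n → ℝ) →ₗ[ℝ] ℝ) ≠ (β' : (Fin n → ℝ) →ₗ[ℝ] ℝ) :=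
      fun h => hne (Subtype.ext h)
    obtain ⟨v0, hv0⟩ : ∃ v0, (β : (Fin n → ℝ) →ₗ[ℝ] ℝ) v0 ≠ (β' : (Fin n → ℝ) →ₗ[ℝ] ℝ) v0 := by
      by_contra h
      push_neg at h
      exact hβne (LinearMap.ext h)
    set d : ℝ := (β : (Fin n → ℝ) →ₗ[ℝ] ℝ) v0 - (β' : (Fin n → ℝ) →ₗ[ℝ] ℝ) v0 with hd
    have hdne : d ≠ 0 := sub_ne_zero.2 hv0
    set v : Fin n → ℝ := (1 / (2 * d)) • v0 with hv
    have hval : (β : (Fin n → ℝ) →ₗ[ℝ] ℝ) v - (β' : (Fin n → ℝ) →ₗ[ℝ] ℝ) v = 1 / 2 := by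
      simp only [hv, LinearMap.map_smul, smul_eq_mul]
      field_simp
      ring
    obtain ⟨T0⟩ : Nonempty Ω := inferInstance
    set a : ℂ := (f T0 : ℂ) with ha
    set b : ℂ := (g T0 : ℂ) with hb
    have haabs : ‖a‖ = 1 := Circle.norm_coe _
    have hbabs : ‖b‖ = 1 := Circle.norm_coe _
    -- at T0 the distance is |a - b|
    have h1 : ‖a - b‖ ≤ dist (G β) (G β') := by
      have := ContinuousMap.dist_apply_le_dist (f := G β) (g := G β') T0
      simpa [hG, Complex.dist_eq] using this
    -- at act v T0 the distance is |a + b|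
    have h2 : ‖a + b‖ ≤ dist (G β) (G β') := by
      have key := ContinuousMap.dist_apply_le_dist (f := G β) (g := G β') (act v T0)
      have hfv := hf T0 v
      have hgv := hg T0 v
      have hexp : Complex.exp (2 * Real.pi * Complex.I * ((β' : (Fin n → ℝ) →ₗ[ℝ] ℝ) v : ℝ))
          = - Complex.exp (2 * Real.pi * Complex.I * ((β : (Fin n → ℝ) →ₗ[ℝ] ℝ) v : ℝ)) := by
        have hc : ((β' : (Fin n → ℝ) →ₗ[ℝ] ℝ) v : ℝ)
            = (β : (Fin n → ℝ) →ₗ[ℝ] ℝ) v - 1 / 2 := by linarith [hval]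
        rw [hc]
        rw [show 2 * (Real.pi : ℂ) * Complex.I *
            (((((β : (Fin n → ℝ) →ₗ[ℝ] ℝ) v - 1 / 2 : ℝ)) : ℂ))
            = 2 * (Real.pi : ℂ) * Complex.I * (((β : (Fin n → ℝ) →ₗ[ℝ] ℝ) v : ℝ) : ℂ)
              + (-(Real.pi * Complex.I)) by push_cast; ring]
        rw [Complex.exp_add, Complex.exp_neg, Complex.exp_pi_mul_I]
        norm_num
      have hdd : dist (G β (act v T0)) (G β' (act v T0)) = ‖a + b‖ := by
        simp only [hG, ContinuousMap.coe_mk, Complex.dist_eq, hfv, hgv, hexp, ← ha, ← hb]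
        show ‖(f (act v T0) : ℂ) - (g (act v T0) : ℂ)‖ = ‖a + b‖
        rw [hfv, hgv, hexp, ← ha, ← hb]
        rw [show Complex.exp (2 * Real.pi * Complex.I * ((β : (Fin n → ℝ) →ₗ[ℝ] ℝ) v : ℝ)) * a -
            -Complex.exp (2 * Real.pi * Complex.I * ((β : (Fin n → ℝ) →ₗ[ℝ] ℝ) v : ℝ)) * b
            = Complex.exp (2 * Real.pi * Complex.I * ((β : (Fin n → ℝ) →ₗ[ℝ] ℝ) v : ℝ)) * (a + b)
            by ring]
        rw [norm_mul, Complex.norm_exp]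
        norm_num
      rw [hdd] at key
      exact key
    have h3 : (2 : ℝ) ≤ ‖a - b‖ + ‖a + b‖ := by
      have htri := norm_add_le (a - b) (a + b)
      have h4 : (a - b) + (a + b) = 2 * a := by ring
      rw [h4, norm_mul, haabs] at htri
      simpa using htri
    linarith
  -- disjoint open balls around the G β give countability
  have hdisj : Pairwise (Function.onFun Disjoint fun β : S => Metric.ball (G β) (1 / 2)) := by
    intro β β' hne
    exact Metric.ball_disjoint_ball (by linarith [hsep β β' hne])
  exact hdisj.countable_of_isOpen_disjoint (fun β => Metric.isOpen_ball)
    (fun β => Metric.nonempty_ball.2 (by norm_num))
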